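/- Let F : ℝ → ℝ be continuous and let I, J be compact non-degenerate intervals such that I positively F-covers J. Then for any a < b in J there exist x₀ ≤ y₀ in I with F(x₀) = a, F(y₀) = b, and F(t) ∈ (a,b) for all t ∈ (x₀, y₀). -/
import Mathlib


/-- If `I` positively `F`-covers `J` and `a < b` are points of `J`, then there are
`x₀ ≤ y₀` in `I` with `F x₀ = a`, `F y₀ = b` and `F(t) ∈ (a,b)` for `t ∈ (x₀, y₀)`. -/
theorem stmt_9 (F : ℝ → ℝ) (hF : Continuous F)
    (a₁ b₁ c d : ℝ) (hI : a₁ < b₁) (hJ : c < d)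
    (x y : ℝ) (hx : x ∈ Set.Icc a₁ b₁) (hy : y ∈ Set.Icc a₁ b₁) (hxy : x ≤ y)
    (hFx : F x ≤ c) (hFy : d ≤ F y)
    (a b : ℝ) (ha : a ∈ Set.Icc c d) (hb : b ∈ Set.Icc c d) (hab : a < b) :
    ∃ x₀ ∈ Set.Icc a₁ b₁, ∃ y₀ ∈ Set.Icc a₁ b₁, x₀ ≤ y₀ ∧
      F x₀ = a ∧ F y₀ = b ∧ ∀ t ∈ Set.Ioo x₀ y₀, F t ∈ Set.Ioo a b := by
  have hFxa : F x ≤ a := hFx.trans ha.1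
  have hFxb : F x < b := lt_of_le_of_lt hFxa hab
  have hbFy : b ≤ F y := hb.2.trans hFy
  -- least point of [x,y] where F = b
  set S : Set ℝ := {t | t ∈ Set.Icc x y ∧ F t = b} with hS
  have hSclosed : IsClosed S := (isClosed_Icc.inter (isClosed_eq hF continuous_const))
  have hSne : S.Nonempty := by
    obtain ⟨t, ht, hFt⟩ := intermediate_value_Icc hxy hF.continuousOn
      (Set.mem_Icc.mpr ⟨hFxb.le, hbFy⟩)
    exact ⟨t, ht, hFt⟩
  have hSbdd : BddBelow S := ⟨x, fun t ht => ht.1.1⟩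
  set y₀ := sInf S with hy₀
  have hy₀S : y₀ ∈ S := hSclosed.csInf_mem hSne hSbdd
  have hFy₀ : F y₀ = b := hy₀S.2
  have hxy₀ : x ≤ y₀ := hy₀S.1.1
  have hy₀y : y₀ ≤ y := hy₀S.1.2
  -- F < b on [x, y₀)
  have hlt : ∀ t ∈ Set.Ico x y₀, F t < b := by
    rintro t ⟨hxt, hty₀⟩
    by_contra h
    push_neg at h
    obtain ⟨s, hs, hFs⟩ := intermediate_value_Icc hxt hF.continuousOn
      (Set.mem_Icc.mpr ⟨hFxb.le, h⟩)
    have : y₀ ≤ s := csInf_le hSbdd ⟨⟨hs.1, hs.2.trans (hty₀.le.trans hy₀y)⟩, hFs⟩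
    linarith [hs.2]
  -- greatest point of [x, y₀] where F = a
  set T : Set ℝ := {t | t ∈ Set.Icc x y₀ ∧ F t = a} with hT
  have hTclosed : IsClosed T := (isClosed_Icc.inter (isClosed_eq hF continuous_const))
  have hTne : T.Nonempty := by
    obtain ⟨t, ht, hFt⟩ := intermediate_value_Icc hxy₀ hF.continuousOn
      (Set.mem_Icc.mpr ⟨hFxa, by rw [hFy₀]; exact hab.le⟩)
    exact ⟨t, ht, hFt⟩
  have hTbdd : BddAbove T := ⟨y₀, fun t ht => ht.1.2⟩
  set x₀ := sSup T with hx₀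
  have hx₀T : x₀ ∈ T := hTclosed.csSup_mem hTne hTbdd
  have hFx₀ : F x₀ = a := hx₀T.2
  have hxx₀ : x ≤ x₀ := hx₀T.1.1
  have hx₀y₀ : x₀ ≤ y₀ := hx₀T.1.2
  -- F > a on (x₀, y₀]
  have hgt : ∀ t ∈ Set.Ioc x₀ y₀, a < F t := by
    rintro t ⟨hx₀t, hty₀⟩
    by_contra h
    push_neg at h
    obtain ⟨s, hs, hFs⟩ := intermediate_value_Icc hty₀ hF.continuousOn
      (Set.mem_Icc.mpr ⟨h, by rw [hFy₀]; exact hab.le⟩)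
    have : s ≤ x₀ := le_csSup hTbdd ⟨⟨hxx₀.trans (hx₀t.le.trans hs.1), hs.2⟩, hFs⟩
    linarith [hs.1]
  refine ⟨x₀, ⟨hx.1.trans hxx₀, (hx₀y₀.trans hy₀y).trans hy.2⟩,
    y₀, ⟨hx.1.trans hxy₀, hy₀y.trans hy.2⟩, hx₀y₀, hFx₀, hFy₀, ?_⟩
  rintro t ⟨h1, h2⟩
  exact ⟨hgt t ⟨h1, h2.le⟩, hlt t ⟨hxx₀.trans h1.le, h2⟩⟩
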